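/- In a barycentric algebra, the entropic identity holds: for all elements t, s, t', s' and all e, d ∈ [0,1], (t +_e s) +_d (t' +_e s') = (t +_d t') +_e (s +_d s'). -/

import Mathlib

structure Barycentric (α : Type*) where
  op : ℝ → α → α → α
  b1 : ∀ t s, op 1 t s = t
  b2 : ∀ (e : ℝ) (t : α), 0 ≤ e → e ≤ 1 → op e t t = t
  sc : ∀ (e : ℝ) (t s : α), 0 ≤ e → e ≤ 1 → op e t s = op (1 - e) s t
  sa : ∀ (e e' : ℝ) (t s u : α), 0 ≤ e → e < 1 → 0 ≤ e' → e' < 1 →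
    op e' (op e t s) u = op (e * e') t (op ((e' - e * e') / (1 - e * e')) s u)

lemma Barycentric.op_zero {α : Type*} (B : Barycentric α) (x y : α) :
    B.op 0 x y = y := by
  rw [B.sc 0 x y le_rfl zero_le_one]
  simpa using B.b1 y x

lemma Barycentric.swap {α : Type*} (B : Barycentric α) (x y z : α) (a b : ℝ)
    (ha0 : 0 < a) (ha1 : a ≤ 1) (hb0 : 0 ≤ b) (hb1 : b < 1) :
    B.op a x (B.op b y z) = B.op (b * (1 - a)) y (B.op (a / (1 - b * (1 - a))) x z) := by
  have h1 : (0:ℝ) ≤ 1 - a := by linarith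
  have h2 : 1 - a < 1 := by linarith
  have hden : 0 < 1 - b * (1 - a) := by nlinarith
  rw [B.sc a x (B.op b y z) ha0.le ha1, B.sa b (1 - a) y z x hb0 hb1 h1 h2]
  congr 1
  have hh0 : 0 ≤ ((1 - a) - b * (1 - a)) / (1 - b * (1 - a)) :=
    div_nonneg (by nlinarith) hden.le
  have hh1 : ((1 - a) - b * (1 - a)) / (1 - b * (1 - a)) ≤ 1 := by
    rw [div_le_one hden]; linarith
  rw [B.sc _ z x hh0 hh1]
  congr 1
  field_simp
  have hne : 1 - (1 - a) * b ≠ 0 := by rw [mul_comm]; exact hden.ne'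
  rw [eq_div_iff hne, sub_mul, div_mul_cancel₀ _ hne]; ring

theorem barycentric_entropic {α : Type*} (B : Barycentric α)
    (t s t' s' : α) (e d : ℝ)
    (he0 : 0 ≤ e) (he1 : e ≤ 1) (hd0 : 0 ≤ d) (hd1 : d ≤ 1) :
    B.op d (B.op e t s) (B.op e t' s') = B.op e (B.op d t t') (B.op d s s') := by
  rcases he1.lt_or_eq with he1 | rfl
  swap
  · simp [B.b1]
  rcases hd1.lt_or_eq with hd1 | rfl
  swap
  · simp [B.b1]
  rcases he0.lt_or_eq with he0 | rfl
  swap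
  · simp [B.op_zero]
  -- main case : 0 < e < 1, 0 ≤ d < 1
  have hde : d * e < 1 := by nlinarith
  have hdne : (1:ℝ) - d * e ≠ 0 := by linarith
  set A : ℝ := (e - d * e) / (1 - d * e) with hA
  have hA0 : 0 < A := div_pos (by nlinarith) (by linarith)
  have hA1 : A ≤ 1 := by
    rw [div_le_one (by linarith)]; linarith
  rw [B.sa e d t s (B.op e t' s') he0.le he1 hd0 hd1,
      B.sa d e t t' (B.op d s s') hd0 hd1 he0.le he1,
      B.swap t' s s' A d hA0 hA1 hd0 hd1]
  have hd' : (1:ℝ) - d ≠ 0 := by linarith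
  have h1 : d * (1 - A) = (d - e * d) / (1 - e * d) := by
    rw [hA, eq_div_iff (by rw [mul_comm]; exact hdne)]
    field_simp
    ring
  have h2 : A / (1 - d * (1 - A)) = e := by
    have hden : 1 - d * (1 - A) = (1 - d) / (1 - d * e) := by
      rw [hA]; field_simp; ring
    rw [hden, hA]
    field_simp
    ring
    have hne : (1:ℝ) - e * d ≠ 0 := by rw [mul_comm]; exact hdne
    rw [show -(e * d * (1 - e * d)⁻¹) + (1 - e * d)⁻¹ = (1 - e * d) * (1 - e * d)⁻¹ by ring,
      mul_inv_cancel₀ hne]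
  rw [h2, h1, mul_comm e d]
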